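/- arXiv:math/0608135 — 2 statements merged into one kernel-verified Lean document; each statement's English description precedes it below -/
import Mathlib

section
/- The function k ↦ 4k²K(k) ∫_{−K(k)}^{K(k)} cn²(y,k) dy is strictly increasing in k on [1/√2, 1); consequently, the squared L² norm of the ground state φ_μ of −φ'' + μφ − φ³ = 0 on (0,1) with zero boundary conditions is a strictly increasing function of μ. -/
open Real Set Filter intervalIntegral

/-- The complete elliptic integral of the first kind. -/
noncomputable def Kell (k : ℝ) : ℝ :=
  ∫ θ in (0:ℝ)..(π/2), 1 / Real.sqrt (1 - k^2 * (Real.sin θ)^2)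

/-- The function appearing in the formula ‖φ_μ‖₂² = 4k²K(k)∫_{−K(k)}^{K(k)} cn²(y,k)dy. -/
noncomputable def Fnorm (cn : ℝ → ℝ → ℝ) (k : ℝ) : ℝ :=
  4 * k^2 * Kell k * ∫ y in (-(Kell k))..(Kell k), (cn y k)^2


noncomputable def wf (k θ : ℝ) : ℝ := Real.sqrt (1 - k^2 * Real.sin θ^2)
noncomputable def Yf (k θ : ℝ) : ℝ := ∫ t in (0:ℝ)..θ, 1 / wf k t

section basic
variable {k : ℝ} (hk0 : 0 ≤ k) (hk1 : k < 1)

include hk0 hk1 in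
lemma den_pos (θ : ℝ) : 0 < 1 - k^2 * Real.sin θ^2 := by
  have h1 : k^2 < 1 := by nlinarith
  have h2 : Real.sin θ^2 ≤ 1 := Real.sin_sq_le_one θ
  nlinarith [sq_nonneg k, sq_nonneg (Real.sin θ)]

include hk0 hk1 in
lemma wf_pos (θ : ℝ) : 0 < wf k θ := Real.sqrt_pos.2 (den_pos hk0 hk1 θ)

omit hk0 hk1 in
lemma wf_le_one (θ : ℝ) : wf k θ ≤ 1 := by
  rw [show (1:ℝ) = Real.sqrt 1 by simp [Real.sqrt_one]]
  apply Real.sqrt_le_sqrt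
  nlinarith [sq_nonneg k, sq_nonneg (Real.sin θ)]

omit hk0 hk1 in
lemma wf_cont : Continuous (wf k) := by
  apply Real.continuous_sqrt.comp; continuity

include hk0 hk1 in
lemma invw_cont : Continuous (fun θ => 1 / wf k θ) :=
  continuous_const.div wf_cont (fun θ => (wf_pos hk0 hk1 θ).ne')

include hk0 hk1 in
lemma one_le_invw (θ : ℝ) : 1 ≤ 1 / wf k θ :=
  by rw [le_div_iff₀ (wf_pos hk0 hk1 θ)]; simpa using wf_le_one (k:=k) θ

include hk0 hk1 in
lemma hY_deriv (θ : ℝ) : HasDerivAt (Yf k) (1 / wf k θ) θ := by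
  apply intervalIntegral.integral_hasDerivAt_right
    ((invw_cont hk0 hk1).intervalIntegrable 0 θ)
    ((invw_cont hk0 hk1).stronglyMeasurableAtFilter _ _)
    (invw_cont hk0 hk1).continuousAt

include hk0 hk1 in
lemma Yf_mono : StrictMono (Yf k) := by
  apply strictMono_of_deriv_pos
  intro θ
  rw [(hY_deriv hk0 hk1 θ).deriv]
  exact div_pos one_pos (wf_pos hk0 hk1 θ)

include hk0 hk1 in
lemma Yf_ge (θ : ℝ) (hθ : 0 ≤ θ) : θ ≤ Yf k θ := by
  have : ∫ t in (0:ℝ)..θ, (1:ℝ) ≤ Yf k θ := by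
    apply intervalIntegral.integral_mono_on hθ
      (intervalIntegrable_const) ((invw_cont hk0 hk1).intervalIntegrable 0 θ)
    exact fun t _ => one_le_invw hk0 hk1 t
  simpa using this

include hk0 hk1 in
lemma Yf_le (θ : ℝ) (hθ : θ ≤ 0) : Yf k θ ≤ θ := by
  have : ∫ t in θ..(0:ℝ), (1:ℝ) ≤ ∫ t in θ..(0:ℝ), 1 / wf k t := by
    apply intervalIntegral.integral_mono_on hθ
      (intervalIntegrable_const) ((invw_cont hk0 hk1).intervalIntegrable _ _)
    exact fun t _ => one_le_invw hk0 hk1 t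
  have h2 : Yf k θ = -∫ t in θ..(0:ℝ), 1 / wf k t := by
    rw [Yf, intervalIntegral.integral_symm]
  rw [h2]
  have h3 : (∫ t in θ..(0:ℝ), (1:ℝ)) = -θ := by simp
  rw [h3] at this
  linarith

include hk0 hk1 in
lemma Yf_surj : Function.Surjective (Yf k) := by
  apply Continuous.surjective
  · exact continuous_iff_continuousAt.2 fun θ => (hY_deriv hk0 hk1 θ).differentiableAt.continuousAt
  · exact tendsto_atTop_mono' _ (eventually_atTop.2 ⟨0, fun θ hθ => Yf_ge hk0 hk1 θ hθ⟩) tendsto_id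
  · exact tendsto_atBot_mono' _ (eventually_atBot.2 ⟨0, fun θ hθ => Yf_le hk0 hk1 θ hθ⟩) tendsto_id

/-- inverse of `Yf k` (the Jacobi amplitude). -/
noncomputable def amf (k : ℝ) (hk0 : 0 ≤ k) (hk1 : k < 1) : ℝ ≃o ℝ :=
  (StrictMono.orderIsoOfSurjective (Yf k) (Yf_mono hk0 hk1) (Yf_surj hk0 hk1)).symm

include hk0 hk1 in
lemma am_Y (θ : ℝ) : amf k hk0 hk1 (Yf k θ) = θ := by
  exact StrictMono.orderIsoOfSurjective_symm_apply_self
    (Yf k) (Yf_mono hk0 hk1) (Yf_surj hk0 hk1) θ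

include hk0 hk1 in
lemma Y_am (y : ℝ) : Yf k (amf k hk0 hk1 y) = y := by
  obtain ⟨θ, rfl⟩ := Yf_surj hk0 hk1 y
  rw [am_Y]

include hk0 hk1 in
lemma am_cont : Continuous (amf k hk0 hk1) := OrderIso.continuous _

lemma Yf_zero : Yf k 0 = 0 := by simp [Yf]

include hk0 hk1 in
lemma am_zero : amf k hk0 hk1 0 = 0 := by
  conv_lhs => rw [← Yf_zero (k := k)]
  exact am_Y hk0 hk1 0

include hk0 hk1 in
lemma ham (y : ℝ) : HasDerivAt (amf k hk0 hk1) (wf k (amf k hk0 hk1 y)) y := by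
  have h := HasDerivAt.of_local_left_inverse ((am_cont hk0 hk1).continuousAt)
    (hY_deriv hk0 hk1 (amf k hk0 hk1 y))
    ((one_div_pos.2 (wf_pos hk0 hk1 _)).ne')
    (Eventually.of_forall (Y_am hk0 hk1))
  simpa [one_div] using h

noncomputable def vf (k : ℝ) (hk0 : 0 ≤ k) (hk1 : k < 1) (y : ℝ) : ℝ :=
  Real.cos (amf k hk0 hk1 y)

noncomputable def vf' (k : ℝ) (hk0 : 0 ≤ k) (hk1 : k < 1) (y : ℝ) : ℝ :=
  -Real.sin (amf k hk0 hk1 y) * wf k (amf k hk0 hk1 y)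

include hk0 hk1 in
lemma hv_deriv (y : ℝ) : HasDerivAt (vf k hk0 hk1) (vf' k hk0 hk1 y) y :=
  (Real.hasDerivAt_cos (amf k hk0 hk1 y)).comp y (ham hk0 hk1 y)

include hk0 hk1 in
lemma hw_deriv (θ : ℝ) : HasDerivAt (wf k)
    ((-(k^2 * (2 * Real.sin θ ^ 1 * Real.cos θ))) / (2 * wf k θ)) θ := by
  have h1 : HasDerivAt (fun θ => Real.sin θ ^ 2) (2 * Real.sin θ ^ 1 * Real.cos θ) θ :=
    (Real.hasDerivAt_sin θ).pow 2
  have h2 : HasDerivAt (fun θ => 1 - k^2 * Real.sin θ ^ 2)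
      (-(k^2 * (2 * Real.sin θ ^ 1 * Real.cos θ))) θ :=
    (h1.const_mul (k^2)).const_sub 1
  exact h2.sqrt (den_pos hk0 hk1 θ).ne'

include hk0 hk1 in
lemma hv'_deriv (y : ℝ) : HasDerivAt (vf' k hk0 hk1)
    ((2*k^2 - 1) * vf k hk0 hk1 y - 2*k^2 * (vf k hk0 hk1 y)^3) y := by
  set θ := amf k hk0 hk1 y with hθ
  have hh : HasDerivAt (fun t => -Real.sin t * wf k t)
      ((-Real.cos θ) * wf k θ +
        (-Real.sin θ) * ((-(k^2 * (2 * Real.sin θ ^ 1 * Real.cos θ))) / (2 * wf k θ))) θ :=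
    ((Real.hasDerivAt_sin θ).neg).mul (hw_deriv hk0 hk1 θ)
  have h := hh.comp y (ham hk0 hk1 y)
  have heq : ((-Real.cos θ) * wf k θ +
        (-Real.sin θ) * ((-(k^2 * (2 * Real.sin θ ^ 1 * Real.cos θ))) / (2 * wf k θ)))
        * wf k θ
      = (2*k^2 - 1) * vf k hk0 hk1 y - 2*k^2 * (vf k hk0 hk1 y)^3 := by
    have hw0 : wf k θ ≠ 0 := (wf_pos hk0 hk1 θ).ne'
    have hw2 : wf k θ ^ 2 = 1 - k^2 * Real.sin θ^2 := Real.sq_sqrt (den_pos hk0 hk1 θ).le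
    have hs : Real.sin θ ^ 2 = 1 - Real.cos θ ^ 2 := Real.sin_sq θ
    simp only [vf, ← hθ]
    have hw3 : wf k θ ^ 3 = (1 - k^2 * Real.sin θ^2) * wf k θ := by
      rw [pow_succ, hw2]
    field_simp
    ring_nf
    linear_combination (-Real.cos θ)*hw2 + (2*k^2*Real.cos θ)*hs
  rw [heq] at h
  exact h

include hk0 hk1 in
lemma vf_zero : vf k hk0 hk1 0 = 1 := by simp [vf, am_zero hk0 hk1]

include hk0 hk1 in
lemma vf'_zero : vf' k hk0 hk1 0 = 0 := by simp [vf', am_zero hk0 hk1]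

include hk0 hk1 in
lemma vf_Y (θ : ℝ) : vf k hk0 hk1 (Yf k θ) = Real.cos θ := by
  simp [vf, am_Y hk0 hk1]

include hk0 hk1 in
lemma vf_cont : Continuous (vf k hk0 hk1) := Real.continuous_cos.comp (am_cont hk0 hk1)

include hk0 hk1 in
lemma vf_sq_le (y : ℝ) : (vf k hk0 hk1 y)^2 ≤ 1 := by
  have := Real.neg_one_le_cos (amf k hk0 hk1 y)
  have := Real.cos_le_one (amf k hk0 hk1 y)
  simp only [vf]; nlinarith

end basic

section ode
/-- The vector field of the Jacobi ODE as a first-order system. -/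
def Ffield (k : ℝ) : ℝ → ℝ × ℝ → ℝ × ℝ :=
  fun _ p => (p.2, (2*k^2 - 1) * p.1 - 2*k^2 * p.1^3)

lemma Ffield_lip {k : ℝ} (hk0 : 0 ≤ k) (hk1 : k < 1) (t : ℝ) :
    LipschitzOnWith 7 (Ffield k t) {p : ℝ × ℝ | p.1^2 ≤ 1} := by
  rw [lipschitzOnWith_iff_dist_le_mul]
  intro p hp q hq
  simp only [Set.mem_setOf_eq] at hp hq
  have hk2 : k^2 ≤ 1 := by nlinarith
  rw [Prod.dist_eq, Prod.dist_eq]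
  simp only [Ffield, Real.dist_eq]
  have habs : |p.1 * q.1| ≤ 1 := by
    rw [abs_mul]
    nlinarith [abs_nonneg p.1, abs_nonneg q.1, sq_abs p.1, sq_abs q.1]
  have hm : (0:ℝ) ≤ max |p.1 - q.1| |p.2 - q.2| := le_max_of_le_left (abs_nonneg _)
  apply max_le
  · calc |p.2 - q.2| ≤ max |p.1 - q.1| |p.2 - q.2| := le_max_right _ _
      _ ≤ 7 * max |p.1 - q.1| |p.2 - q.2| := by linarith
  · have key : |(2*k^2 - 1) * p.1 - 2*k^2 * p.1^3 - ((2*k^2 - 1) * q.1 - 2*k^2 * q.1^3)|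
        ≤ 7 * |p.1 - q.1| := by
      have : (2*k^2 - 1) * p.1 - 2*k^2 * p.1^3 - ((2*k^2 - 1) * q.1 - 2*k^2 * q.1^3)
          = (p.1 - q.1) * ((2*k^2 - 1) - 2*k^2 * (p.1^2 + p.1*q.1 + q.1^2)) := by ring
      rw [this, abs_mul, mul_comm]
      apply mul_le_mul_of_nonneg_right _ (abs_nonneg _)
      rw [abs_le]
      constructor
      · nlinarith [abs_le.1 habs]
      · nlinarith [abs_le.1 habs]
    calc |(2*k^2 - 1) * p.1 - 2*k^2 * p.1^3 - ((2*k^2 - 1) * q.1 - 2*k^2 * q.1^3)|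
        ≤ 7 * |p.1 - q.1| := key
      _ ≤ 7 * max |p.1 - q.1| |p.2 - q.2| := by
          have := le_max_left |p.1 - q.1| |p.2 - q.2|; linarith

end ode

section cnlem
variable {k : ℝ} (hk0 : 0 ≤ k) (hk1 : k < 1) {c : ℝ → ℝ}
  (hreg : ContDiff ℝ 2 c)
  (hode : ∀ y : ℝ, deriv (deriv c) y = (2*k^2 - 1) * c y - 2*k^2 * (c y)^3)
  (hc0 : c 0 = 1) (hc0' : deriv c 0 = 0)

include hreg in
lemma hdc : Differentiable ℝ c := hreg.differentiable (by norm_num)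

include hreg in
lemma hdc' : Differentiable ℝ (deriv c) := by
  have h2 : ContDiff ℝ ((1 : WithTop ℕ∞) + 1) c := by
    convert hreg using 2
    exact one_add_one_eq_two
  rw [contDiff_succ_iff_deriv] at h2
  exact h2.2.2.differentiable (by norm_num)

omit hk0 hk1 in
include hreg hode hc0 hc0' in
lemma energy_bound (y : ℝ) : (c y)^2 ≤ 1 := by
  set E : ℝ → ℝ := fun y => (deriv c y)^2 - (2*k^2 - 1)*(c y)^2 + k^2*(c y)^4 with hE
  have hEd : ∀ x : ℝ, HasDerivAt E 0 x := by
    intro x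
    have h2 : HasDerivAt c (deriv c x) x := (hdc hreg x).hasDerivAt
    have h1 : HasDerivAt (deriv c) (deriv (deriv c) x) x := (hdc' hreg x).hasDerivAt
    have hd : HasDerivAt E
        ((2 * deriv c x ^ 1 * deriv (deriv c) x)
          - (2*k^2 - 1) * (2 * c x ^ 1 * deriv c x)
          + k^2 * (4 * c x ^ 3 * deriv c x)) x :=
      (((h1.pow 2).sub ((h2.pow 2).const_mul (2*k^2-1))).add ((h2.pow 4).const_mul (k^2)))
    convert hd using 1
    rw [hode x]; ring
  have hconst : ∀ x : ℝ, E x = E 0 := fun x =>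
    is_const_of_deriv_eq_zero (fun t => (hEd t).differentiableAt) (fun t => (hEd t).deriv) x 0
  have hE0 : E 0 = 1 - k^2 := by simp [hE, hc0, hc0']; ring
  have hy := (hconst y).trans hE0
  simp only [hE] at hy
  nlinarith [sq_nonneg (deriv c y), sq_nonneg (c y), sq_nonneg (c y^2 - 1),
    sq_nonneg (c y * c y), hy]

include hk0 hk1 hreg hode hc0 hc0' in
lemma cn_self_eq {B : ℝ} : ∀ y ∈ Icc (0:ℝ) B, c y = vf k hk0 hk1 y := by
  intro y hy
  set f : ℝ → ℝ × ℝ := fun y => (c y, deriv c y) with hf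
  set g : ℝ → ℝ × ℝ := fun y => (vf k hk0 hk1 y, vf' k hk0 hk1 y) with hg
  have hfd : ∀ t : ℝ, HasDerivAt f (Ffield k t (f t)) t := by
    intro t
    have := ((hdc hreg t).hasDerivAt.prodMk (hdc' hreg t).hasDerivAt)
    rwa [hode t] at this
  have hgd : ∀ t : ℝ, HasDerivAt g (Ffield k t (g t)) t := fun t =>
    (hv_deriv hk0 hk1 t).prodMk (hv'_deriv hk0 hk1 t)
  have heq : EqOn f g (Icc 0 B) := by
    apply ODE_solution_unique_of_mem_Icc_right
      (v := Ffield k) (s := fun _ => {p : ℝ × ℝ | p.1^2 ≤ 1})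
      (fun t _ => Ffield_lip hk0 hk1 t)
      (Continuous.continuousOn (by exact ((hdc hreg).continuous.prodMk
        (hdc' hreg).continuous)))
      (fun t _ => (hfd t).hasDerivWithinAt)
      (fun t _ => energy_bound hreg hode hc0 hc0' t)
      (Continuous.continuousOn (by exact ((vf_cont hk0 hk1).prodMk
        (Continuous.mul (Real.continuous_sin.comp (am_cont hk0 hk1)).neg
          (wf_cont.comp (am_cont hk0 hk1))))))
      (fun t _ => (hgd t).hasDerivWithinAt)
      (fun t _ => vf_sq_le hk0 hk1 t)
      (by simp [hf, hg, hc0, hc0', vf_zero hk0 hk1, vf'_zero hk0 hk1])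
  have h2 := heq hy
  rw [hf, hg] at h2
  exact (Prod.ext_iff.1 h2).1

end cnlem
section cnlem2
variable {k : ℝ} (hk0 : 0 ≤ k) (hk1 : k < 1) {c : ℝ → ℝ}
  (hreg : ContDiff ℝ 2 c)
  (hode : ∀ y : ℝ, deriv (deriv c) y = (2*k^2 - 1) * c y - 2*k^2 * (c y)^3)
  (hc0 : c 0 = 1) (hc0' : deriv c 0 = 0)

include hk0 hk1 hreg hode hc0 hc0' in
lemma cn_neg_eq {B : ℝ} : ∀ y ∈ Icc (0:ℝ) B, c (-y) = vf k hk0 hk1 y := by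
  intro y hy
  set f : ℝ → ℝ × ℝ := fun y => (c (-y), -deriv c (-y)) with hf
  set g : ℝ → ℝ × ℝ := fun y => (vf k hk0 hk1 y, vf' k hk0 hk1 y) with hg
  have hfd : ∀ t : ℝ, HasDerivAt f (Ffield k t (f t)) t := by
    intro t
    have h1 : HasDerivAt (fun y : ℝ => c (-y)) (-deriv c (-t)) t := by
      have := ((hdc hreg (-t)).hasDerivAt).comp t (hasDerivAt_neg t)
      simpa [mul_comm, Function.comp_def] using this
    have h2 : HasDerivAt (fun y : ℝ => -deriv c (-y)) (deriv (deriv c) (-t)) t := by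
      have := (((hdc' hreg (-t)).hasDerivAt).comp t (hasDerivAt_neg t)).neg
      simpa [mul_comm, Function.comp_def, Pi.neg_def] using this
    have h3 := h1.prodMk h2
    have : Ffield k t (f t) = (-deriv c (-t), deriv (deriv c) (-t)) := by
      simp [Ffield, hf, hode (-t)]
    rw [this]
    exact h3
  have hgd : ∀ t : ℝ, HasDerivAt g (Ffield k t (g t)) t := fun t =>
    (hv_deriv hk0 hk1 t).prodMk (hv'_deriv hk0 hk1 t)
  have heq : EqOn f g (Icc 0 B) := by
    apply ODE_solution_unique_of_mem_Icc_right
      (v := Ffield k) (s := fun _ => {p : ℝ × ℝ | p.1^2 ≤ 1})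
      (fun t _ => Ffield_lip hk0 hk1 t)
      (Continuous.continuousOn (by exact (((hdc hreg).continuous.comp continuous_neg).prodMk
        ((hdc' hreg).continuous.comp continuous_neg).neg)))
      (fun t _ => (hfd t).hasDerivWithinAt)
      (fun t _ => energy_bound hreg hode hc0 hc0' (-t))
      (Continuous.continuousOn (by exact ((vf_cont hk0 hk1).prodMk
        (Continuous.mul (Real.continuous_sin.comp (am_cont hk0 hk1)).neg
          (wf_cont.comp (am_cont hk0 hk1))))))
      (fun t _ => (hgd t).hasDerivWithinAt)
      (fun t _ => vf_sq_le hk0 hk1 t)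
      (by simp [hf, hg, hc0, hc0', vf_zero hk0 hk1, vf'_zero hk0 hk1])
  have h2 := heq hy
  rw [hf, hg] at h2
  exact (Prod.ext_iff.1 h2).1

end cnlem2

noncomputable def Gell (k : ℝ) : ℝ :=
  ∫ θ in (0:ℝ)..(π/2), (Real.cos θ)^2 / Real.sqrt (1 - k^2 * (Real.sin θ)^2)

section reduction
variable {k : ℝ} (hk0 : 0 ≤ k) (hk1 : k < 1)

lemma Kell_eq_Yf : Kell k = Yf k (π/2) := rfl

include hk0 hk1 in
lemma Kell_nonneg : 0 ≤ Kell k := by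
  rw [Kell_eq_Yf, ← Yf_zero (k := k)]
  exact (Yf_mono hk0 hk1).monotone (by positivity)

include hk0 hk1 in
lemma Fnorm_eq (cn : ℝ → ℝ → ℝ)
    (hreg : ContDiff ℝ 2 (fun y => cn y k))
    (hode : ∀ y : ℝ, deriv (deriv (fun y => cn y k)) y
      = (2*k^2 - 1) * cn y k - 2*k^2 * (cn y k)^3)
    (hc0 : cn 0 k = 1) (hc0' : deriv (fun y => cn y k) 0 = 0) :
    Fnorm cn k = 8 * k^2 * Kell k * Gell k := by
  set c : ℝ → ℝ := fun y => cn y k with hc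
  set K0 := Kell k with hK
  have hK0 : 0 ≤ K0 := Kell_nonneg hk0 hk1
  have hccont : Continuous c := hreg.continuous
  have hvcont : Continuous (vf k hk0 hk1) := vf_cont hk0 hk1
  -- the four pieces
  have int1 : IntervalIntegrable (fun y => (c y)^2) MeasureTheory.volume (-K0) 0 :=
    (hccont.pow 2).intervalIntegrable _ _
  have int2 : IntervalIntegrable (fun y => (c y)^2) MeasureTheory.volume 0 K0 :=
    (hccont.pow 2).intervalIntegrable _ _
  have hsplit : ∫ y in (-K0)..K0, (c y)^2
      = (∫ y in (-K0)..0, (c y)^2) + ∫ y in (0:ℝ)..K0, (c y)^2 :=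
    (intervalIntegral.integral_add_adjacent_intervals int1 int2).symm
  have hneg : (∫ y in (-K0)..0, (c y)^2) = ∫ y in (0:ℝ)..K0, (c (-y))^2 := by
    have := intervalIntegral.integral_comp_neg (a := (0:ℝ)) (b := K0)
      (fun x => (c x)^2)
    simp only [neg_zero] at this
    exact this.symm
  have huIcc : uIcc (0:ℝ) K0 = Icc 0 K0 := uIcc_of_le hK0
  have hcongr1 : (∫ y in (0:ℝ)..K0, (c (-y))^2) = ∫ y in (0:ℝ)..K0, (vf k hk0 hk1 y)^2 := by
    apply intervalIntegral.integral_congr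
    intro y hy
    rw [huIcc] at hy
    show c (-y) ^ 2 = _
    rw [cn_neg_eq hk0 hk1 hreg (fun y => by rw [hode y]) hc0 hc0' y hy]
  have hcongr2 : (∫ y in (0:ℝ)..K0, (c y)^2) = ∫ y in (0:ℝ)..K0, (vf k hk0 hk1 y)^2 := by
    apply intervalIntegral.integral_congr
    intro y hy
    rw [huIcc] at hy
    show c y ^ 2 = _
    rw [cn_self_eq hk0 hk1 hreg (fun y => by rw [hode y]) hc0 hc0' y hy]
  have hsub : (∫ y in (0:ℝ)..K0, (vf k hk0 hk1 y)^2) = Gell k := by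
    have hcv : (∫ x in (0:ℝ)..(π/2), (1 / wf k x) • (vf k hk0 hk1 (Yf k x))^2)
        = ∫ y in (Yf k 0)..(Yf k (π/2)), (vf k hk0 hk1 y)^2 := by
      apply intervalIntegral.integral_comp_smul_deriv
        (fun x _ => hY_deriv hk0 hk1 x)
        ((invw_cont hk0 hk1).continuousOn)
        (hvcont.pow 2)
    rw [Yf_zero, ← Kell_eq_Yf, ← hK] at hcv
    rw [← hcv, Gell]
    apply intervalIntegral.integral_congr
    intro θ _
    show (1 / wf k θ) • vf k hk0 hk1 (Yf k θ) ^ 2 = _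
    rw [vf_Y hk0 hk1 θ, smul_eq_mul, wf]
    ring
  have : ∫ y in (-K0)..K0, (c y)^2 = 2 * Gell k := by
    rw [hsplit, hneg, hcongr1, hcongr2, hsub]; ring
  show 4 * k^2 * Kell k * (∫ y in (-(Kell k))..(Kell k), (c y)^2) = _
  rw [show -Kell k = -K0 by rw [hK], show Kell k = K0 from hK.symm] at *
  rw [this]
  ring

end reduction

section mono

lemma Kell_pos {k : ℝ} (hk0 : 0 ≤ k) (hk1 : k < 1) : 0 < Kell k := by
  apply intervalIntegral.intervalIntegral_pos_of_pos_on
    ((invw_cont hk0 hk1).intervalIntegrable 0 (π/2))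
  · intro θ _
    exact div_pos one_pos (wf_pos hk0 hk1 θ)
  · positivity

lemma Gell_cont_integrand {k : ℝ} (hk0 : 0 ≤ k) (hk1 : k < 1) :
    Continuous (fun θ => (Real.cos θ)^2 / Real.sqrt (1 - k^2 * (Real.sin θ)^2)) :=
  (Real.continuous_cos.pow 2).div wf_cont (fun θ => (wf_pos hk0 hk1 θ).ne')

lemma Gell_pos {k : ℝ} (hk0 : 0 ≤ k) (hk1 : k < 1) : 0 < Gell k := by
  apply intervalIntegral.intervalIntegral_pos_of_pos_on
    ((Gell_cont_integrand hk0 hk1).intervalIntegrable 0 (π/2))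
  · intro θ hθ
    have hcos : 0 < Real.cos θ :=
      Real.cos_pos_of_mem_Ioo ⟨by linarith [hθ.1, pi_pos], hθ.2⟩
    exact div_pos (by positivity) (wf_pos hk0 hk1 θ)
  · positivity

lemma wf_anti {k₁ k₂ : ℝ} (h0 : 0 ≤ k₁) (h12 : k₁ ≤ k₂) (θ : ℝ) :
    wf k₂ θ ≤ wf k₁ θ := by
  apply Real.sqrt_le_sqrt
  have hk : k₁^2 ≤ k₂^2 := by nlinarith
  nlinarith [mul_le_mul_of_nonneg_right hk (sq_nonneg (Real.sin θ))]

lemma Kell_le {k₁ k₂ : ℝ} (h0 : 0 ≤ k₁) (h12 : k₁ ≤ k₂) (h2 : k₂ < 1) :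
    Kell k₁ ≤ Kell k₂ := by
  have h0' : 0 ≤ k₂ := le_trans h0 h12
  have h1 : k₁ < 1 := lt_of_le_of_lt h12 h2
  apply intervalIntegral.integral_mono_on (by positivity)
    ((invw_cont h0 h1).intervalIntegrable 0 (π/2))
    ((invw_cont h0' h2).intervalIntegrable 0 (π/2))
  intro θ _
  have := wf_anti h0 h12 θ
  exact one_div_le_one_div_of_le (wf_pos h0' h2 θ) this

lemma Gell_le {k₁ k₂ : ℝ} (h0 : 0 ≤ k₁) (h12 : k₁ ≤ k₂) (h2 : k₂ < 1) :
    Gell k₁ ≤ Gell k₂ := by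
  have h0' : 0 ≤ k₂ := le_trans h0 h12
  have h1 : k₁ < 1 := lt_of_le_of_lt h12 h2
  apply intervalIntegral.integral_mono_on (by positivity)
    ((Gell_cont_integrand h0 h1).intervalIntegrable 0 (π/2))
    ((Gell_cont_integrand h0' h2).intervalIntegrable 0 (π/2))
  intro θ _
  have hle := wf_anti h0 h12 θ
  have hp2 := wf_pos h0' h2 θ
  have : (Real.cos θ)^2 / wf k₁ θ ≤ (Real.cos θ)^2 / wf k₂ θ :=
    div_le_div_of_nonneg_left (sq_nonneg _) hp2 hle
  exact this

end mono

/-- The map k ↦ 4k²K(k)∫_{−K(k)}^{K(k)} cn²(y,k)dy is strictly increasing on [1/√2, 1);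
consequently the squared L²-norm of the ground state φ_μ is strictly increasing in μ. -/
theorem ground_state_L2_norm_strictMono
    (cn : ℝ → ℝ → ℝ)
    -- cn(·,k) is the Jacobi elliptic cosine: the solution of the Jacobi ODE
    -- cn'' = (2k²−1)cn − 2k²cn³ with cn(0,k) = 1, cn'(0,k) = 0.
    (hcn_reg : ∀ k : ℝ, ContDiff ℝ 2 (fun y => cn y k))
    (hcn_ode : ∀ k y : ℝ,
      deriv (deriv (fun y => cn y k)) y = (2*k^2 - 1) * cn y k - 2*k^2 * (cn y k)^3)
    (hcn0 : ∀ k : ℝ, cn 0 k = 1)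
    (hcn0' : ∀ k : ℝ, deriv (fun y => cn y k) 0 = 0)
    (φ : ℝ → ℝ → ℝ)
    -- φ μ is the positive ground state of −φ'' + μφ − φ³ = 0 with Dirichlet conditions
    (hφ : ∀ μ : ℝ, 0 < μ →
      ContDiff ℝ 2 (φ μ) ∧ φ μ 0 = 0 ∧ φ μ 1 = 0 ∧
      ∀ x ∈ Set.Ioo (0:ℝ) 1,
        0 < φ μ x ∧ -(deriv (deriv (φ μ)) x) + μ * φ μ x - (φ μ x)^3 = 0)
    (kfun : ℝ → ℝ)
    (hk_mem : ∀ μ : ℝ, 0 < μ → kfun μ ∈ Set.Ico (1 / Real.sqrt 2) 1)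
    (hk_mono : StrictMonoOn kfun (Set.Ioi 0))
    (hnorm : ∀ μ : ℝ, 0 < μ →
      (∫ x in (0:ℝ)..1, (φ μ x)^2) = Fnorm cn (kfun μ)) :
    StrictMonoOn (Fnorm cn) (Set.Ico (1 / Real.sqrt 2) 1) ∧
    StrictMonoOn (fun μ => ∫ x in (0:ℝ)..1, (φ μ x)^2) (Set.Ioi 0) := by
  have hs2 : (0:ℝ) < 1 / Real.sqrt 2 := by positivity
  have part1 : StrictMonoOn (Fnorm cn) (Set.Ico (1 / Real.sqrt 2) 1) := by
    intro k₁ hk₁ k₂ hk₂ hlt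
    have h10 : (0:ℝ) < k₁ := lt_of_lt_of_le hs2 hk₁.1
    have h20 : (0:ℝ) < k₂ := lt_of_lt_of_le hs2 hk₂.1
    have h11 : k₁ < 1 := hk₁.2
    have h21 : k₂ < 1 := hk₂.2
    rw [Fnorm_eq h10.le h11 cn (hcn_reg k₁) (hcn_ode k₁) (hcn0 k₁) (hcn0' k₁),
        Fnorm_eq h20.le h21 cn (hcn_reg k₂) (hcn_ode k₂) (hcn0 k₂) (hcn0' k₂)]
    have hK1 : 0 < Kell k₁ := Kell_pos h10.le h11
    have hG1 : 0 < Gell k₁ := Gell_pos h10.le h11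
    have hK2 : 0 < Kell k₂ := Kell_pos h20.le h21
    have hKle : Kell k₁ ≤ Kell k₂ := Kell_le h10.le hlt.le h21
    have hGle : Gell k₁ ≤ Gell k₂ := Gell_le h10.le hlt.le h21
    have hsq : 8 * k₁^2 < 8 * k₂^2 := by nlinarith
    calc 8 * k₁^2 * Kell k₁ * Gell k₁
        < 8 * k₂^2 * Kell k₁ * Gell k₁ :=
          mul_lt_mul_of_pos_right (mul_lt_mul_of_pos_right hsq hK1) hG1
      _ ≤ 8 * k₂^2 * Kell k₂ * Gell k₁ :=
          mul_le_mul_of_nonneg_right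
            (mul_le_mul_of_nonneg_left hKle (by positivity)) hG1.le
      _ ≤ 8 * k₂^2 * Kell k₂ * Gell k₂ := by
          apply mul_le_mul_of_nonneg_left hGle
          positivity
  refine ⟨part1, ?_⟩
  intro μ₁ h₁ μ₂ h₂ hlt
  simp only
  rw [hnorm μ₁ h₁, hnorm μ₂ h₂]
  exact part1 (hk_mem μ₁ h₁) (hk_mem μ₂ h₂) (hk_mono h₁ h₂ hlt)
end

section
/- Let φ be the positive ground state and η ∈ H¹₀(0,1) orthogonal in L² to φ³. Then ⟨L₊η, η⟩ = ∫₀¹(η'² + μη² − 3φ²η²)dx ≥ 0, where L₊ = −d²/dx² + μ − 3φ² with Dirichlet boundary conditions. -/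
open Real Set intervalIntegral Filter Topology MeasureTheory

private lemma aux_limit' (lam C b c d : ℝ) (hlam : 0 < lam)
    (key : ∀ t : ℝ, 0 < t → 0 < 1 + 6*b*t^2 + 4*c*t^3 + d*t^4 →
      lam^2 * (1 + 6*b*t^2 + 4*c*t^3 + d*t^4) ≤ (lam + C*t^2)^2) :
    3*lam*b ≤ C := by
  set g : ℝ → ℝ := fun t => 2*lam*C + C^2*t^2 - lam^2*(6*b + 4*c*t + d*t^2) with hg
  have hNcont : Continuous (fun t : ℝ => 1 + 6*b*t^2 + 4*c*t^3 + d*t^4) := by continuity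
  have hNev : ∀ᶠ t in 𝓝 (0:ℝ), 0 < 1 + 6*b*t^2 + 4*c*t^3 + d*t^4 := by
    have h := hNcont.continuousAt (x := 0)
    have h0 : (0:ℝ) < 1 + 6*b*(0:ℝ)^2 + 4*c*(0:ℝ)^3 + d*(0:ℝ)^4 := by norm_num
    exact h.eventually (eventually_gt_nhds h0)
  have hev : ∀ᶠ t in 𝓝[>] (0:ℝ), 0 ≤ g t := by
    filter_upwards [nhdsWithin_le_nhds hNev, self_mem_nhdsWithin] with t hN ht
    have ht : (0:ℝ) < t := ht
    have hk := key t ht hN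
    have ht2 : (0:ℝ) < t^2 := by positivity
    have h' : t^2 * (lam^2*(6*b + 4*c*t + d*t^2)) ≤ t^2 * (2*lam*C + C^2*t^2) := by nlinarith
    have := (mul_le_mul_iff_right₀ ht2).mp h'
    simp only [hg]; linarith
  have hgc : Continuous g := by continuity
  have h0 : 0 ≤ g 0 := ge_of_tendsto (hgc.continuousAt.continuousWithinAt.tendsto) hev
  simp only [hg] at h0
  nlinarith


/-- Membership in H¹₀(0,1), modelled by C¹ functions vanishing at the endpoints. -/
def H10 (u : ℝ → ℝ) : Prop := ContDiff ℝ 1 u ∧ u 0 = 0 ∧ u 1 = 0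

/-- If η ∈ H¹₀(0,1) is L²-orthogonal to φ³, then the quadratic form of
L₊ = −d²/dx² + μ − 3φ² is nonnegative at η. -/
theorem Lplus_form_nonneg_on_orthogonal (μ lam : ℝ) (hμ : -(π^2) < μ)
    (hlam : 0 < lam) (w φ : ℝ → ℝ)
    (hw : H10 w) (hwpos : ∀ x ∈ Set.Ioo (0:ℝ) 1, 0 < w x)
    (hconstraint : (∫ x in (0:ℝ)..1, (w x)^4) = 1)
    -- w minimizes J[u] = (1/2)∫₀¹(u'² + μu²) on {∫u⁴ = 1}
    (hmin : ∀ u : ℝ → ℝ, H10 u → (∫ x in (0:ℝ)..1, (u x)^4) = 1 →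
      (1/2) * (∫ x in (0:ℝ)..1, ((deriv w x)^2 + μ * (w x)^2)) ≤
      (1/2) * (∫ x in (0:ℝ)..1, ((deriv u x)^2 + μ * (u x)^2)))
    -- Euler–Lagrange equation with Lagrange multiplier lam
    (hEL : ∀ v : ℝ → ℝ, H10 v →
      (∫ x in (0:ℝ)..1, (deriv w x * deriv v x + μ * w x * v x)) =
        lam * ∫ x in (0:ℝ)..1, (w x)^3 * v x)
    -- the ground state φ = λ^{1/2} w
    (hφ : ∀ x : ℝ, φ x = Real.sqrt lam * w x)
    (η : ℝ → ℝ) (hη : H10 η)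
    -- η is orthogonal to φ³ in L²
    (horth : (∫ x in (0:ℝ)..1, η x * (φ x)^3) = 0) :
    0 ≤ ∫ x in (0:ℝ)..1,
      ((deriv η x)^2 + μ * (η x)^2 - 3 * (φ x)^2 * (η x)^2) := by
  obtain ⟨hwC, hw0, hw1⟩ := hw
  obtain ⟨hηC, hη0, hη1⟩ := hη
  have hwc : Continuous w := hwC.continuous
  have hηc : Continuous η := hηC.continuous
  have hwd : Continuous (deriv w) := hwC.continuous_deriv le_rfl
  have hηd : Continuous (deriv η) := hηC.continuous_deriv le_rfl
  have hdw : Differentiable ℝ w := hwC.differentiable one_ne_zero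
  have hdη : Differentiable ℝ η := hηC.differentiable one_ne_zero
  have I : ∀ f : ℝ → ℝ, Continuous f → IntervalIntegrable f volume 0 1 :=
    fun f hf => hf.intervalIntegrable 0 1
  have hφsq : ∀ x, (φ x)^2 = lam * (w x)^2 := by
    intro x; rw [hφ x, mul_pow, Real.sq_sqrt hlam.le]
  -- abbreviations
  set A := ∫ x in (0:ℝ)..1, ((deriv w x)^2 + μ * (w x)^2) with hAdef
  set Cq := ∫ x in (0:ℝ)..1, ((deriv η x)^2 + μ * (η x)^2) with hCdef
  set a := ∫ x in (0:ℝ)..1, (w x)^3 * η x with hadef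
  set b := ∫ x in (0:ℝ)..1, (w x)^2 * (η x)^2 with hbdef
  set c := ∫ x in (0:ℝ)..1, (w x) * (η x)^3 with hcdef
  set d := ∫ x in (0:ℝ)..1, (η x)^4 with hddef
  -- a = 0 from orthogonality
  have ha : a = 0 := by
    have h1 : (∫ x in (0:ℝ)..1, η x * (φ x)^3)
        = ∫ x in (0:ℝ)..1, (Real.sqrt lam)^3 * ((w x)^3 * η x) :=
      integral_congr (fun x _ => by rw [hφ x]; ring)
    rw [h1, intervalIntegral.integral_const_mul] at horth
    have hs3 : (Real.sqrt lam)^3 ≠ 0 := by positivity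
    rcases mul_eq_zero.mp horth with h | h
    · exact absurd h hs3
    · rw [hadef, h]
  -- B = 0 from Euler-Lagrange applied to η
  have hB : (∫ x in (0:ℝ)..1, (deriv w x * deriv η x + μ * w x * η x)) = 0 := by
    rw [hEL η ⟨hηC, hη0, hη1⟩, ← hadef, ha, mul_zero]
  -- A = lam from Euler-Lagrange applied to w
  have hA : A = lam := by
    have h := hEL w ⟨hwC, hw0, hw1⟩
    have h1 : (∫ x in (0:ℝ)..1, (deriv w x * deriv w x + μ * w x * w x)) = A :=
      integral_congr (fun x _ => by ring)
    have h2 : (∫ x in (0:ℝ)..1, (w x)^3 * w x) = 1 := by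
      rw [show (∫ x in (0:ℝ)..1, (w x)^3 * w x) = ∫ x in (0:ℝ)..1, (w x)^4 from
        integral_congr (fun x _ => by ring), hconstraint]
    rw [h1, h2, mul_one] at h
    exact h
  -- key inequality for each small positive t
  have key : ∀ t : ℝ, 0 < t → 0 < 1 + 6*b*t^2 + 4*c*t^3 + d*t^4 →
      lam^2 * (1 + 6*b*t^2 + 4*c*t^3 + d*t^4) ≤ (lam + Cq*t^2)^2 := by
    intro t ht hN
    set N : ℝ := 1 + 6*b*t^2 + 4*c*t^3 + d*t^4 with hNdef
    set s : ℝ := N ^ ((1:ℝ)/4) with hsdef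
    have hs : 0 < s := Real.rpow_pos_of_pos hN _
    have hs4 : s^4 = N := by
      rw [hsdef, ← Real.rpow_natCast (N ^ ((1:ℝ)/4)) 4, ← Real.rpow_mul hN.le]
      norm_num
    set u : ℝ → ℝ := fun x => (w x + t * η x) / s with hudef
    have huC : ContDiff ℝ 1 u := (hwC.add (contDiff_const.mul hηC)).div_const s
    have hu0 : u 0 = 0 := by simp [hudef, hw0, hη0]
    have hu1 : u 1 = 0 := by simp [hudef, hw1, hη1]
    have hderu : ∀ x, deriv u x = (deriv w x + t * deriv η x) / s := by
      intro x
      rw [hudef]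
      rw [deriv_div_const, deriv_fun_add (hdw x) ((hdη x).const_mul t),
        deriv_const_mul t (hdη x)]
    -- expansion of the quartic integral
    have hexp4 : (∫ x in (0:ℝ)..1, (w x + t*η x)^4) = N := by
      have h1 : (∫ x in (0:ℝ)..1, (w x + t*η x)^4)
          = ∫ x in (0:ℝ)..1, ((w x)^4 + ((4*t)*((w x)^3*η x) + ((6*t^2)*((w x)^2*(η x)^2)
              + ((4*t^3)*(w x*(η x)^3) + (t^4)*((η x)^4))))) :=
        integral_congr (fun x _ => by ring)
      rw [h1, integral_add (I _ (by fun_prop)) (I _ (by fun_prop)),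
        integral_add (I _ (by fun_prop)) (I _ (by fun_prop)),
        integral_add (I _ (by fun_prop)) (I _ (by fun_prop)),
        integral_add (I _ (by fun_prop)) (I _ (by fun_prop)),
        intervalIntegral.integral_const_mul, intervalIntegral.integral_const_mul, intervalIntegral.integral_const_mul, intervalIntegral.integral_const_mul,
        hconstraint, ← hadef, ← hbdef, ← hcdef, ← hddef, ha, hNdef]
      ring
    have hu4 : (∫ x in (0:ℝ)..1, (u x)^4) = 1 := by
      have h1 : (∫ x in (0:ℝ)..1, (u x)^4)
          = ∫ x in (0:ℝ)..1, (s^4)⁻¹ * ((w x + t*η x)^4) :=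
        integral_congr (fun x _ => by rw [hudef]; field_simp)
      rw [h1, intervalIntegral.integral_const_mul, hexp4, hs4, inv_mul_cancel₀ hN.ne']
    -- quadratic form at u
    have hQu : (∫ x in (0:ℝ)..1, ((deriv u x)^2 + μ * (u x)^2))
        = (s^2)⁻¹ * (A + Cq*t^2) := by
      have h1 : (∫ x in (0:ℝ)..1, ((deriv u x)^2 + μ * (u x)^2))
          = ∫ x in (0:ℝ)..1, (s^2)⁻¹ * (((deriv w x)^2 + μ * (w x)^2)
              + ((2*t)*(deriv w x * deriv η x + μ * w x * η x)
              + (t^2)*((deriv η x)^2 + μ * (η x)^2))) := by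
        refine integral_congr (fun x _ => ?_)
        rw [hderu x, hudef]
        field_simp
        ring
      have e1 : (∫ x in (0:ℝ)..1, (((deriv w x)^2 + μ * (w x)^2)
              + ((2*t)*(deriv w x * deriv η x + μ * w x * η x)
              + (t^2)*((deriv η x)^2 + μ * (η x)^2))))
          = (∫ x in (0:ℝ)..1, ((deriv w x)^2 + μ * (w x)^2))
            + ∫ x in (0:ℝ)..1, ((2*t)*(deriv w x * deriv η x + μ * w x * η x)
              + (t^2)*((deriv η x)^2 + μ * (η x)^2)) :=
        integral_add (I _ (by fun_prop)) (I _ (by fun_prop))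
      have e2 : (∫ x in (0:ℝ)..1, ((2*t)*(deriv w x * deriv η x + μ * w x * η x)
              + (t^2)*((deriv η x)^2 + μ * (η x)^2)))
          = (∫ x in (0:ℝ)..1, (2*t)*(deriv w x * deriv η x + μ * w x * η x))
            + ∫ x in (0:ℝ)..1, (t^2)*((deriv η x)^2 + μ * (η x)^2) :=
        integral_add (I _ (by fun_prop)) (I _ (by fun_prop))
      have e3 : (∫ x in (0:ℝ)..1, (2*t)*(deriv w x * deriv η x + μ * w x * η x))
          = (2*t) * ∫ x in (0:ℝ)..1, (deriv w x * deriv η x + μ * w x * η x) :=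
        integral_const_mul _ _
      have e4 : (∫ x in (0:ℝ)..1, (t^2)*((deriv η x)^2 + μ * (η x)^2))
          = (t^2) * ∫ x in (0:ℝ)..1, ((deriv η x)^2 + μ * (η x)^2) :=
        integral_const_mul _ _
      rw [h1, intervalIntegral.integral_const_mul, e1, e2, e3, e4, hB, ← hAdef, ← hCdef]
      ring
    have hm := hmin u ⟨huC, hu0, hu1⟩ hu4
    rw [hQu] at hm
    have hs2 : (0:ℝ) < s^2 := by positivity
    have h' : A ≤ (s^2)⁻¹ * (A + Cq*t^2) := by linarith
    have hml : A * s^2 ≤ A + Cq*t^2 := by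
      calc A * s^2 ≤ ((s^2)⁻¹ * (A + Cq*t^2)) * s^2 := mul_le_mul_of_nonneg_right h' hs2.le
        _ = A + Cq*t^2 := by field_simp
    have hml' : lam * s^2 ≤ lam + Cq*t^2 := by rw [hA] at hml; exact hml
    have hnn : 0 ≤ lam * s^2 := by positivity
    have := pow_le_pow_left₀ hnn hml' 2
    calc lam^2 * N = (lam * s^2)^2 := by rw [← hs4]; ring
      _ ≤ (lam + Cq*t^2)^2 := this
  have hfinal : 3*lam*b ≤ Cq := aux_limit' lam Cq b c d hlam key
  -- rewrite the goal
  have hgoal : (∫ x in (0:ℝ)..1, ((deriv η x)^2 + μ * (η x)^2 - 3 * (φ x)^2 * (η x)^2))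
      = Cq - 3*lam*b := by
    have h1 : (∫ x in (0:ℝ)..1, ((deriv η x)^2 + μ * (η x)^2 - 3 * (φ x)^2 * (η x)^2))
        = ∫ x in (0:ℝ)..1, (((deriv η x)^2 + μ * (η x)^2) - (3*lam)*((w x)^2*(η x)^2)) :=
      integral_congr (fun x _ => by rw [hφsq x]; ring)
    rw [h1, integral_sub (I _ (by fun_prop)) (I _ (by fun_prop)),
      intervalIntegral.integral_const_mul, ← hCdef, ← hbdef]
  rw [hgoal]
  linarith
end
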